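/- If m is not a power of a prime and there exists a twofold set of n-th roots of a in ℤ_m (n a power of 2, n > 1), then there exists a twofold set of n-th roots of a in ℤ_m in which no pairwise difference is invertible. -/

import Mathlib

/-- `α 0, …, α (2^t - 1)` is a twofold set of `2^t`-th roots of `a`. -/
def IsTwofoldSet {R : Type*} [CommRing R] (t : ℕ) (α : ℕ → R) (a : R) : Prop :=
  (∀ i < 2 ^ t, α i ^ (2 ^ t) = a) ∧
  ∀ k ≤ t, ∀ i < 2 ^ t, ∀ j < 2 ^ t,
    i ≡ j [MOD 2 ^ (t - k)] → α i ^ (2 ^ k) = α j ^ (2 ^ k)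

theorem twofold_without_invertible_differences {m : ℕ} (hm : 2 ≤ m)
    (hnotpp : ¬ ∃ p k : ℕ, p.Prime ∧ m = p ^ k)
    {t : ℕ} (ht : 1 ≤ t) {a : ZMod m} {α : ℕ → ZMod m}
    (htw : IsTwofoldSet t α a) :
    ∃ α' : ℕ → ZMod m, IsTwofoldSet t α' a ∧
      ∀ i < 2 ^ t, ∀ j < 2 ^ t, i ≠ j → ¬ IsUnit (α' i - α' j) := by
  have hm0 : m ≠ 0 := by omega
  have hm1 : m ≠ 1 := by omega
  obtain ⟨p, hp, hpd⟩ := Nat.exists_prime_and_dvd hm1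
  set d1 : ℕ := p ^ m.factorization p with hd1
  set d2 : ℕ := m / d1 with hd2
  have h1 : d1 * d2 = m := Nat.ordProj_mul_ordCompl_eq_self m p
  have cop : Nat.Coprime d1 d2 := Nat.Coprime.pow_left _ (Nat.coprime_ordCompl hp hm0)
  have hd2ne : d2 ≠ 1 := by
    intro h
    refine hnotpp ⟨p, m.factorization p, hp, ?_⟩
    conv_lhs => rw [← h1, h, mul_one]
  have hd2pos : 0 < d2 := Nat.pos_of_ne_zero (by
    intro h; rw [h, mul_zero] at h1; exact hm0 h1.symm)
  haveI : Fact (1 < d2) := ⟨by omega⟩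
  let e : ZMod m ≃+* ZMod d1 × ZMod d2 :=
    (ZMod.ringEquivCongr h1.symm).trans (ZMod.chineseRemainder cop)
  set α' : ℕ → ZMod m := fun i => e.symm ((e (α i)).1, (e (α 0)).2) with hα'
  have he : ∀ i, e (α' i) = ((e (α i)).1, (e (α 0)).2) := fun i => e.apply_symm_apply _
  obtain ⟨h1tw, h2tw⟩ := htw
  have h0lt : 0 < 2 ^ t := Nat.pow_pos (by norm_num)
  have key : ∀ (x y : ZMod m) (n : ℕ),
      (e.symm ((e x).1, (e y).2)) ^ n = e.symm ((e (x ^ n)).1, (e (y ^ n)).2) := by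
    intro x y n
    rw [← map_pow, Prod.pow_mk, ← Prod.pow_fst, ← Prod.pow_snd, ← map_pow, ← map_pow]
  refine ⟨α', ⟨?_, ?_⟩, ?_⟩
  · intro i hi
    show (e.symm ((e (α i)).1, (e (α 0)).2)) ^ 2 ^ t = a
    rw [key, h1tw i hi, h1tw 0 h0lt]
    simp
  · intro k hk i hi j hj hmod
    show (e.symm ((e (α i)).1, (e (α 0)).2)) ^ 2 ^ k
        = (e.symm ((e (α j)).1, (e (α 0)).2)) ^ 2 ^ k
    rw [key, key, h2tw k hk i hi j hj hmod]
  · intro i hi j hj hij hu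
    have : IsUnit (e (α' i - α' j)) := hu.map e
    have h2 : IsUnit ((e (α' i - α' j)).2) := this.map (RingHom.snd (ZMod d1) (ZMod d2))
    rw [map_sub, he i, he j] at h2
    simp at h2
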